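/- For scalars δ > 0, the function δ ↦ (1/δ)‖x − prox_{δφ}(x − δ∇f(x))‖ is nonincreasing in δ. Consequently, for 0 < λ ≤ 1 one has ‖F^λ(x)‖ ≤ ‖F^I(x)‖ and ‖F^I(x)‖ ≤ λ^{-1}‖F^λ(x)‖, where F^δ(x) := x − prox_{δφ}(x − δ∇f(x)). -/

import Mathlib

/-- `p` is the proximal point `prox_{λφ}(x)`. -/
def IsProx {n : ℕ} (φ : EuclideanSpace ℝ (Fin n) → ℝ) (lam : ℝ)
    (x p : EuclideanSpace ℝ (Fin n)) : Prop :=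
  ∀ y, φ p + (1 / (2 * lam)) * ‖x - p‖ ^ 2 ≤ φ y + (1 / (2 * lam)) * ‖x - y‖ ^ 2

open RealInnerProductSpace

lemma prox_subgradient {n : ℕ} (φ : EuclideanSpace ℝ (Fin n) → ℝ)
    (hconv : ConvexOn ℝ Set.univ φ) (δ : ℝ) (hδ : 0 < δ)
    (z p : EuclideanSpace ℝ (Fin n)) (hp : IsProx φ δ z p)
    (y : EuclideanSpace ℝ (Fin n)) :
    φ p + ⟪z - p, y - p⟫ / δ ≤ φ y := by
  have hN : (0:ℝ) ≤ ‖y - p‖ ^ 2 / (2 * δ) := by positivity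
  have key : ∀ t : ℝ, 0 < t → t ≤ 1 →
      φ p + ⟪z - p, y - p⟫ / δ ≤ φ y + t * (‖y - p‖ ^ 2 / (2 * δ)) := by
    intro t ht ht1
    have hq := hp (p + t • (y - p))
    have hconvq : φ (p + t • (y - p)) ≤ (1 - t) * φ p + t * φ y := by
      have h := hconv.2 (Set.mem_univ p) (Set.mem_univ y) (by linarith : (0:ℝ) ≤ 1 - t)
        ht.le (by ring)
      have heq : (1 - t) • p + t • y = p + t • (y - p) := by module
      rwa [heq] at h
    have hnorm : ‖z - (p + t • (y - p))‖ ^ 2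
        = ‖z - p‖ ^ 2 - 2 * (t * ⟪z - p, y - p⟫) + t ^ 2 * ‖y - p‖ ^ 2 := by
      have heq : z - (p + t • (y - p)) = (z - p) - t • (y - p) := by module
      rw [heq, norm_sub_sq_real, real_inner_smul_right, norm_smul]
      rw [mul_pow, Real.norm_eq_abs, sq_abs]
    rw [hnorm] at hq
    set I := ⟪z - p, y - p⟫ with hI
    set N := ‖y - p‖ ^ 2 with hNdef
    set S := ‖z - p‖ ^ 2 with hS
    have hδ0 : δ ≠ 0 := ne_of_gt hδ
    have e1 : (1/(2*δ)) * (2*(t*I)) = t * (I/δ) := by field_simp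
    have e2 : (1/(2*δ)) * (t^2*N) = t * (t*(N/(2*δ))) := by field_simp
    have hX : t * (φ p + I / δ) ≤ t * (φ y + t * (N / (2 * δ))) := by
      have hq' : φ p + 1/(2*δ)*S ≤ φ (p + t • (y - p)) + (1/(2*δ)*S - (1/(2*δ))*(2*(t*I)) + (1/(2*δ))*(t^2*N)) := by
        have : (1:ℝ)/(2*δ) * (S - 2*(t*I) + t^2*N) = 1/(2*δ)*S - (1/(2*δ))*(2*(t*I)) + (1/(2*δ))*(t^2*N) := by ring
        linarith [hq, this.ge, this.le]
      nlinarith [hq', hconvq, e1, e2]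
    have := le_of_mul_le_mul_left hX ht
    linarith
  apply le_of_forall_pos_le_add
  intro ε hε
  set C := ‖y - p‖ ^ 2 / (2 * δ) with hC
  set t := min 1 (ε / (C + 1)) with htdef
  have htpos : 0 < t := lt_min one_pos (by positivity)
  have ht1 : t ≤ 1 := min_le_left _ _
  have htC : t * C ≤ ε := by
    have h1 : t ≤ ε / (C + 1) := min_le_right _ _
    have h2 : t * C ≤ (ε / (C + 1)) * (C + 1) :=
      mul_le_mul h1 (by linarith) hN (by positivity)
    rwa [div_mul_cancel₀ ε (by positivity : C + 1 ≠ 0)] at h2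
  calc φ p + ⟪z - p, y - p⟫ / δ ≤ φ y + t * C := key t htpos ht1
    _ ≤ φ y + ε := by linarith
lemma scaling_algebra {δ δ' A B : ℝ} (hδ : 0 < δ) (hδδ' : δ ≤ δ')
    (hA0 : 0 ≤ A) (hB0 : 0 ≤ B)
    (hmain : δ' * A^2 + δ * B^2 ≤ (δ + δ') * (A * B)) :
    A ≤ B ∧ δ'⁻¹ * B ≤ δ⁻¹ * A := by
  have hδ'pos : 0 < δ' := lt_of_lt_of_le hδ hδδ'
  have part1 : A ≤ B := by
    by_contra hc
    push_neg at hc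
    have h5 : 0 < δ' * A - δ * B := by nlinarith [mul_nonneg hA0 (sub_nonneg.mpr hδδ')]
    nlinarith [mul_pos h5 (sub_pos.mpr hc)]
  refine ⟨part1, ?_⟩
  rw [inv_mul_eq_div, inv_mul_eq_div, div_le_div_iff₀ hδ'pos hδ]
  by_contra hc
  push_neg at hc
  have hBA : A < B := by nlinarith [mul_nonneg hA0 (sub_nonneg.mpr hδδ')]
  nlinarith [mul_pos (sub_pos.mpr hc) (sub_pos.mpr hBA)]

/-- Scaling monotonicity of the prox-gradient residual
`F^δ(x) = x − prox_{δφ}(x − δ∇f(x))` (Nesterov): for `0 < δ ≤ δ'`,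
`‖F^δ(x)‖ ≤ ‖F^{δ'}(x)‖` and `δ'⁻¹‖F^{δ'}(x)‖ ≤ δ⁻¹‖F^δ(x)‖`.
With `δ' = 1` this gives `‖F^λ(x)‖ ≤ ‖F^I(x)‖` and `‖F^I(x)‖ ≤ λ⁻¹‖F^λ(x)‖`
for `0 < λ ≤ 1`. -/
theorem residual_scaling_monotone {n : ℕ}
    (f : EuclideanSpace ℝ (Fin n) → ℝ)
    (f' : EuclideanSpace ℝ (Fin n) → EuclideanSpace ℝ (Fin n))
    (φ : EuclideanSpace ℝ (Fin n) → ℝ)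
    (hf : ∀ x, HasGradientAt f (f' x) x)
    (hconv : ConvexOn ℝ Set.univ φ) (hlsc : LowerSemicontinuous φ)
    (δ δ' : ℝ) (hδ : 0 < δ) (hδδ' : δ ≤ δ')
    (x p p' : EuclideanSpace ℝ (Fin n))
    (hp : IsProx φ δ (x - δ • f' x) p)
    (hp' : IsProx φ δ' (x - δ' • f' x) p') :
    ‖x - p‖ ≤ ‖x - p'‖ ∧ δ'⁻¹ * ‖x - p'‖ ≤ δ⁻¹ * ‖x - p‖ := by
  have hδ'pos : 0 < δ' := lt_of_lt_of_le hδ hδδ'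
  have h1 := prox_subgradient φ hconv δ hδ _ p hp p'
  have h2 := prox_subgradient φ hconv δ' hδ'pos _ p' hp' p
  set g := f' x with hg
  set a := x - p with ha
  set b := x - p' with hb
  have e1 : (x - δ • g) - p = a - δ • g := by rw [ha]; module
  have e2 : (x - δ' • g) - p' = b - δ' • g := by rw [hb]; module
  have e3 : p' - p = a - b := by rw [ha, hb]; module
  have e4 : p - p' = b - a := by rw [ha, hb]; module
  rw [e1, e3] at h1
  rw [e2, e4] at h2
  have ha1 : ⟪a - δ • g, a - b⟫ = ⟪a, a - b⟫ - δ * ⟪g, a - b⟫ := by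
    rw [inner_sub_left, real_inner_smul_left]
  have ha2 : ⟪b - δ' • g, b - a⟫ = ⟪b, b - a⟫ - δ' * ⟪g, b - a⟫ := by
    rw [inner_sub_left, real_inner_smul_left]
  have hgab : ⟪g, b - a⟫ = - ⟪g, a - b⟫ := by
    rw [← inner_neg_right]; congr 1; module
  have hiaa : ⟪a, a - b⟫ = ‖a‖^2 - ⟪a, b⟫ := by
    rw [inner_sub_right, real_inner_self_eq_norm_sq]
  have hibb : ⟪b, b - a⟫ = ‖b‖^2 - ⟪a, b⟫ := by
    rw [inner_sub_right, real_inner_self_eq_norm_sq, real_inner_comm]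
  -- combine h1 and h2
  have hkey : ‖a‖^2 / δ + ‖b‖^2 / δ' ≤ ⟪a, b⟫ / δ + ⟪a, b⟫ / δ' := by
    have hs : (‖a‖^2 - ⟪a,b⟫ - δ * ⟪g, a-b⟫) / δ + (‖b‖^2 - ⟪a,b⟫ - δ' * -⟪g, a-b⟫) / δ' ≤ 0 := by
      have h1' : (‖a‖^2 - ⟪a,b⟫ - δ * ⟪g, a-b⟫) / δ ≤ φ p' - φ p := by
        rw [ha1, hiaa] at h1; linarith
      have h2' : (‖b‖^2 - ⟪a,b⟫ - δ' * -⟪g, a-b⟫) / δ' ≤ φ p - φ p' := by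
        rw [ha2, hibb, hgab] at h2; linarith
      linarith
    have hδ0 : δ ≠ 0 := ne_of_gt hδ
    have hδ'0 : δ' ≠ 0 := ne_of_gt hδ'pos
    have expand : (‖a‖^2 - ⟪a,b⟫ - δ * ⟪g, a-b⟫) / δ + (‖b‖^2 - ⟪a,b⟫ - δ' * -⟪g, a-b⟫) / δ'
        = ‖a‖^2 / δ + ‖b‖^2 / δ' - (⟪a,b⟫ / δ + ⟪a,b⟫ / δ') := by
      field_simp; ring
    rw [expand] at hs; linarith
  have hip : ⟪a, b⟫ ≤ ‖a‖ * ‖b‖ := real_inner_le_norm a b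
  set A := ‖a‖ with hA
  set B := ‖b‖ with hB
  have hA0 : 0 ≤ A := norm_nonneg _
  have hB0 : 0 ≤ B := norm_nonneg _
  have hmain : δ' * A^2 + δ * B^2 ≤ (δ + δ') * (A * B) := by
    have h3 : A^2 / δ + B^2 / δ' ≤ (A*B) / δ + (A*B) / δ' := by
      have g1 : ⟪a,b⟫ / δ ≤ (A*B)/δ := by gcongr
      have g2 : ⟪a,b⟫ / δ' ≤ (A*B)/δ' := by gcongr
      linarith [hkey]
    rw [div_add_div _ _ (ne_of_gt hδ) (ne_of_gt hδ'pos),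
        div_add_div _ _ (ne_of_gt hδ) (ne_of_gt hδ'pos),
        div_le_div_iff₀ (by positivity) (by positivity)] at h3
    have h4 := le_of_mul_le_mul_right h3 (mul_pos hδ hδ'pos)
    linarith
  have := scaling_algebra hδ hδδ' hA0 hB0 hmain
  rw [hA, hB] at this
  exact this
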